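/- The rank of the snake matrix computes a Hom space: for a bipartite type A quiver Q, a representation V with dimension vector d, and an interval J = [α_i, β_j], one has rank M_J(V) + dim Hom_Q(I_{[β_i, α_j]}, V) = Σ_k d(x_k) (summing over the x-vertices appearing as column blocks of M_J), where I_{[β_i, α_j]} is the interval indecomposable that is the cokernel of the projective presentation whose matrix is the snake of arrows from α_i to β_j. -/

import Mathlib

open Module

/-- The head (an even vertex `y`) of the arrow `t` of the bipartite type `A` quiver with
vertices `0,…,2n` (`y_k` is vertex `2k`, `x_k` is vertex `2k-1`; arrow `t` joins vertices
`t` and `t+1` and is oriented from the odd to the even vertex; the arrow `α_k` has index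
`2k-2` and `β_k` has index `2k-1`). -/
def headV (n : ℕ) (t : Fin (2 * n)) : Fin (2 * n + 1) :=
  if Even t.val then ⟨t.val, by have := t.isLt; omega⟩
  else ⟨t.val + 1, by have := t.isLt; omega⟩

/-- The tail (an odd vertex `x`) of the arrow `t`. -/
def tailV (n : ℕ) (t : Fin (2 * n)) : Fin (2 * n + 1) :=
  if Even t.val then ⟨t.val + 1, by have := t.isLt; omega⟩
  else ⟨t.val, by have := t.isLt; omega⟩

/-- The snake map `M_J(V)` of a representation `V`, for the interval `J` of arrows
`a ≤ t ≤ b`, padded by zeros to an endomorphism of `⨁_v V_v`. -/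
noncomputable def snakeMap {K : Type*} [Field K] {n : ℕ}
    (M : Fin (2 * n + 1) → Type*) [∀ v, AddCommGroup (M v)] [∀ v, Module K (M v)]
    (f : ∀ t : Fin (2 * n), M (tailV n t) →ₗ[K] M (headV n t)) (a b : ℕ) :
    (∀ v, M v) →ₗ[K] (∀ v, M v) :=
  ∑ t ∈ Finset.univ.filter (fun t : Fin (2 * n) => a ≤ t.val ∧ t.val ≤ b),
    (LinearMap.single K M (headV n t)).comp ((f t).comp (LinearMap.proj (tailV n t)))

/-- The space `Hom_Q(I_{[β_i, α_j]}, V)` of homomorphisms from the interval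
indecomposable `I_{[β_i, α_j]}` (supported on the vertices `2i-1 ≤ v ≤ 2j-1`, with
identity maps over the arrows `2i-1 ≤ t ≤ 2j-2` of the interval) to the representation
`V = (M, f)`: a homomorphism is a tuple `m = (m_v)` with `m_v = 0` outside of the
support, satisfying the commutation relations `f_t(m_{t(t)}) = m_{h(t)}` over arrows of
the interval and `f_t(m_{t(t)}) = 0` over the remaining arrows. -/
noncomputable def homInterval {K : Type*} [Field K] {n : ℕ}
    (M : Fin (2 * n + 1) → Type*) [∀ v, AddCommGroup (M v)] [∀ v, Module K (M v)]
    (f : ∀ t : Fin (2 * n), M (tailV n t) →ₗ[K] M (headV n t)) (i j : ℕ) :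
    Submodule K (∀ v, M v) :=
  LinearMap.ker (LinearMap.prod
    (LinearMap.pi (fun v : Fin (2 * n + 1) =>
      if 2 * i ≤ v.val + 1 ∧ v.val + 1 ≤ 2 * j then (0 : (∀ v, M v) →ₗ[K] M v)
      else LinearMap.proj v))
    (LinearMap.pi (fun t : Fin (2 * n) =>
      (f t).comp (LinearMap.proj (tailV n t)) -
        (if 2 * i ≤ t.val + 1 ∧ t.val + 2 ≤ 2 * j
         then LinearMap.proj (headV n t) else 0))))

namespace Stmt17

lemma headV_val {n : ℕ} (t : Fin (2 * n)) :
    (headV n t).val = if Even t.val then t.val else t.val + 1 := by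
  unfold headV; split <;> rfl

lemma tailV_val {n : ℕ} (t : Fin (2 * n)) :
    (tailV n t).val = if Even t.val then t.val + 1 else t.val := by
  unfold tailV; split <;> rfl

lemma headV_mod {n : ℕ} (t : Fin (2 * n)) :
    (headV n t).val % 2 = 0 ∧
      ((headV n t).val = t.val ∨ (headV n t).val = t.val + 1) ∧
      (t.val % 2 = 0 → (headV n t).val = t.val) ∧
      (t.val % 2 = 1 → (headV n t).val = t.val + 1) := by
  rw [headV_val]
  rcases Nat.even_or_odd t.val with h | h
  · have := Nat.even_iff.mp h
    simp [h]; omega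
  · have h' := Nat.odd_iff.mp h
    have : ¬ Even t.val := by rw [Nat.even_iff]; omega
    simp [this]; omega

lemma tailV_mod {n : ℕ} (t : Fin (2 * n)) :
    (tailV n t).val % 2 = 1 ∧
      ((tailV n t).val = t.val ∨ (tailV n t).val = t.val + 1) ∧
      (t.val % 2 = 0 → (tailV n t).val = t.val + 1) ∧
      (t.val % 2 = 1 → (tailV n t).val = t.val) := by
  rw [tailV_val]
  rcases Nat.even_or_odd t.val with h | h
  · have := Nat.even_iff.mp h
    simp [h]; omega
  · have h' := Nat.odd_iff.mp h
    have : ¬ Even t.val := by rw [Nat.even_iff]; omega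
    simp [this]; omega

variable {K : Type*} [Field K] {n : ℕ}
variable (M : Fin (2 * n + 1) → Type*) [∀ v, AddCommGroup (M v)] [∀ v, Module K (M v)]

/-- Evaluation of a sum of `Pi.single` packets at a vertex away from all heads. -/
lemma sum_single_apply₀ (S : Finset (Fin (2 * n))) (w : ∀ t, M (headV n t))
    (y : Fin (2 * n + 1)) (h : ∀ t ∈ S, headV n t ≠ y) :
    (∑ t ∈ S, Pi.single (headV n t) (w t)) y = 0 := by
  rw [Finset.sum_apply]
  exact Finset.sum_eq_zero fun t ht => Pi.single_eq_of_ne (Ne.symm (h t ht)) _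

lemma sum_single_apply_unique (S : Finset (Fin (2 * n))) (w : ∀ t, M (headV n t))
    (y : Fin (2 * n + 1)) (t₁ : Fin (2 * n)) (h₁ : t₁ ∈ S)
    (huniq : ∀ t ∈ S, t ≠ t₁ → headV n t ≠ y) :
    (∑ t ∈ S, Pi.single (headV n t) (w t)) y = Pi.single (headV n t₁) (w t₁) y := by
  rw [Finset.sum_apply]
  exact Finset.sum_eq_single_of_mem t₁ h₁ fun t ht hne =>
    Pi.single_eq_of_ne (Ne.symm (huniq t ht hne)) _

lemma sum_single_apply_pair (S : Finset (Fin (2 * n))) (w : ∀ t, M (headV n t))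
    (y : Fin (2 * n + 1)) (t₀ t₁ : Fin (2 * n)) (h₀ : t₀ ∈ S) (h₁ : t₁ ∈ S)
    (hne : t₀ ≠ t₁) (huniq : ∀ t ∈ S, t ≠ t₀ → t ≠ t₁ → headV n t ≠ y) :
    (∑ t ∈ S, Pi.single (headV n t) (w t)) y
      = Pi.single (headV n t₀) (w t₀) y + Pi.single (headV n t₁) (w t₁) y := by
  rw [Finset.sum_apply]
  have hsub : ({t₀, t₁} : Finset (Fin (2 * n))) ⊆ S := by
    simp [Finset.insert_subset_iff, h₀, h₁]
  rw [← Finset.sum_subset hsub (fun t ht hts => ?_), Finset.sum_pair hne]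
  simp only [Finset.mem_insert, Finset.mem_singleton, not_or] at hts
  exact Pi.single_eq_of_ne (Ne.symm (huniq t ht hts.1 hts.2)) _

variable (f : ∀ t : Fin (2 * n), M (tailV n t) →ₗ[K] M (headV n t))

lemma snake_apply (a b : ℕ) (u : ∀ v, M v) :
    snakeMap M f a b u =
      ∑ t ∈ Finset.univ.filter (fun t : Fin (2 * n) => a ≤ t.val ∧ t.val ≤ b),
        Pi.single (headV n t) (f t (u (tailV n t))) := by
  simp [snakeMap, LinearMap.sum_apply, LinearMap.comp_apply]

/-- The odd vertices in the vertex span of the interval of arrows `[2i-2, 2j-1]`. -/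
def Cnd {n : ℕ} (i j : ℕ) (v : Fin (2 * n + 1)) : Prop :=
  ¬ Even v.val ∧ 2 * i - 2 ≤ v.val ∧ v.val ≤ 2 * j

instance {n i j : ℕ} : DecidablePred (Cnd (n := n) i j) := fun v => by
  unfold Cnd; infer_instance

noncomputable def incl (i j : ℕ) :
    (∀ v : {v : Fin (2 * n + 1) // Cnd i j v}, M v.val) →ₗ[K] (∀ v, M v) :=
  LinearMap.pi fun v =>
    if h : Cnd i j v then LinearMap.proj (⟨v, h⟩ : {v : Fin (2 * n + 1) // Cnd i j v})
    else 0

lemma incl_apply (i j : ℕ) (d : ∀ v : {v : Fin (2 * n + 1) // Cnd i j v}, M v.val)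
    (v : Fin (2 * n + 1)) :
    incl (K := K) M i j d v = if h : Cnd i j v then d ⟨v, h⟩ else 0 := by
  unfold incl
  rw [LinearMap.pi_apply]
  split <;> rfl

noncomputable def restr (i j : ℕ) :
    (∀ v, M v) →ₗ[K] (∀ v : {v : Fin (2 * n + 1) // Cnd i j v}, M v.val) :=
  LinearMap.pi fun v => LinearMap.proj v.val

@[simp] lemma restr_apply (i j : ℕ) (u : ∀ v, M v) (v : {v : Fin (2 * n + 1) // Cnd i j v}) :
    restr (K := K) M i j u v = u v.val := rfl

noncomputable def sgn : (∀ v, M v) →ₗ[K] (∀ v, M v) :=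
  LinearMap.pi fun v => ((-1 : K) ^ (v.val / 2)) • LinearMap.proj v

@[simp] lemma sgn_apply (u : ∀ v, M v) (v : Fin (2 * n + 1)) :
    sgn (K := K) M u v = ((-1 : K) ^ (v.val / 2)) • u v := rfl

lemma neg_one_pow_smul_self {V : Type*} [AddCommGroup V] [Module K V] (e : ℕ) (x : V) :
    ((-1 : K) ^ e) • ((-1 : K) ^ e) • x = x := by
  rw [smul_smul, ← pow_add, Even.neg_one_pow ⟨e, rfl⟩, one_smul]

lemma cnd_tailV (i j : ℕ) (hi : 1 ≤ i) (hj : 1 ≤ j) (t : Fin (2 * n))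
    (h1 : 2 * i - 2 ≤ t.val) (h2 : t.val ≤ 2 * j - 1) : Cnd i j (tailV n t) := by
  obtain ⟨hm, _, _, _⟩ := tailV_mod t
  refine ⟨by rw [Nat.even_iff]; omega, by omega, by omega⟩

lemma snake_congr (i j : ℕ) (hi : 1 ≤ i) (hj : 1 ≤ j) (u w : ∀ v, M v)
    (h : ∀ v, Cnd i j v → u v = w v) :
    snakeMap M f (2 * i - 2) (2 * j - 1) u = snakeMap M f (2 * i - 2) (2 * j - 1) w := by
  rw [snake_apply, snake_apply]
  refine Finset.sum_congr rfl fun t ht => ?_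
  rw [Finset.mem_filter] at ht
  rw [h _ (cnd_tailV i j hi hj t ht.2.1 ht.2.2)]

noncomputable def psi (i j : ℕ) :
    (∀ v : {v : Fin (2 * n + 1) // Cnd i j v}, M v.val) →ₗ[K] (∀ v, M v) :=
  (snakeMap M f (2 * i - 2) (2 * j - 1)).comp ((sgn M).comp (incl M i j))

lemma psi_apply (i j : ℕ) (d : ∀ v : {v : Fin (2 * n + 1) // Cnd i j v}, M v.val) :
    psi M f i j d = snakeMap M f (2 * i - 2) (2 * j - 1) (sgn (K := K) M (incl (K := K) M i j d)) := rfl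

lemma psi_range (i j : ℕ) (hi : 1 ≤ i) (hj : 1 ≤ j) :
    LinearMap.range (psi M f i j)
      = LinearMap.range (snakeMap M f (2 * i - 2) (2 * j - 1)) := by
  apply le_antisymm
  · rintro x ⟨d, rfl⟩
    exact ⟨sgn M (incl M i j d), rfl⟩
  · rintro x ⟨u, rfl⟩
    refine ⟨restr (K := K) M i j (sgn (K := K) M u), ?_⟩
    rw [psi_apply]
    refine snake_congr M f i j hi hj _ _ fun v hv => ?_
    rw [sgn_apply, incl_apply, dif_pos hv, restr_apply, sgn_apply,
      neg_one_pow_smul_self]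

lemma mem_homInterval_iff (i j : ℕ) (m : ∀ v, M v) :
    m ∈ homInterval M f i j ↔
      ((∀ v : Fin (2 * n + 1), ¬ (2 * i ≤ v.val + 1 ∧ v.val + 1 ≤ 2 * j) → m v = 0) ∧
       (∀ t : Fin (2 * n), f t (m (tailV n t)) =
          if 2 * i ≤ t.val + 1 ∧ t.val + 2 ≤ 2 * j then m (headV n t) else 0)) := by
  rw [homInterval, LinearMap.mem_ker, LinearMap.prod_apply]
  simp only [Function.prod, Prod.mk_eq_zero]
  constructor
  · rintro ⟨h1, h2⟩
    constructor
    · intro v hv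
      have hv1 := congrFun h1 v
      rw [LinearMap.pi_apply, if_neg hv, Pi.zero_apply] at hv1
      exact hv1
    · intro t
      have ht1 := congrFun h2 t
      rw [LinearMap.pi_apply, LinearMap.sub_apply, LinearMap.comp_apply,
        LinearMap.proj_apply, Pi.zero_apply, sub_eq_zero] at ht1
      by_cases hq : 2 * i ≤ t.val + 1 ∧ t.val + 2 ≤ 2 * j
      · rw [if_pos hq] at ht1 ⊢; exact ht1
      · rw [if_neg hq] at ht1 ⊢; exact ht1
  · rintro ⟨h1, h2⟩
    constructor
    · funext v
      rw [LinearMap.pi_apply, Pi.zero_apply]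
      by_cases hv : 2 * i ≤ v.val + 1 ∧ v.val + 1 ≤ 2 * j
      · rw [if_pos hv]; rfl
      · rw [if_neg hv]; exact h1 v hv
    · funext t
      rw [LinearMap.pi_apply, Pi.zero_apply, LinearMap.sub_apply, LinearMap.comp_apply,
        LinearMap.proj_apply, sub_eq_zero]
      have ht1 := h2 t
      by_cases hq : 2 * i ≤ t.val + 1 ∧ t.val + 2 ≤ 2 * j
      · rw [if_pos hq] at ht1 ⊢; exact ht1
      · rw [if_neg hq] at ht1 ⊢; exact ht1

lemma headV_succ (c : ℕ) (hlt : c + 1 < 2 * n) (hc : c % 2 = 1) :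
    headV n ⟨c + 1, hlt⟩ = headV n (⟨c, by omega⟩ : Fin (2 * n)) := by
  apply Fin.ext
  rw [headV_val, headV_val]
  have h1 : Even ((⟨c + 1, hlt⟩ : Fin (2 * n)) : ℕ) := by
    simp only [Fin.val_mk]; rw [Nat.even_iff]; omega
  have h2 : ¬ Even ((⟨c, by omega⟩ : Fin (2 * n)) : ℕ) := by
    simp only [Fin.val_mk]; rw [Nat.even_iff]; omega
  rw [if_pos h1, if_neg h2]

lemma sum_g_zero (i j : ℕ) (hi : 1 ≤ i) (hj : j ≤ n) (g : Fin (2 * n) → (∀ v, M v))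
    (hpair : ∀ (c : ℕ) (hlt : c + 1 < 2 * n), c % 2 = 1 →
      g ⟨c, by omega⟩ + g ⟨c + 1, hlt⟩ = 0) :
    ∑ t ∈ Finset.univ.filter (fun t : Fin (2 * n) => 2 * i ≤ t.val + 1 ∧ t.val + 2 ≤ 2 * j),
      g t = 0 := by
  have invpf : ∀ a : Fin (2 * n),
      a ∈ Finset.univ.filter
        (fun t : Fin (2 * n) => 2 * i ≤ t.val + 1 ∧ t.val + 2 ≤ 2 * j) →
      (if Even a.val then a.val - 1 else a.val + 1) < 2 * n := by
    intro a ha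
    have hq := (Finset.mem_filter.1 ha).2
    have := a.isLt
    split_ifs <;> omega
  refine Finset.sum_involution (fun a ha => ⟨_, invpf a ha⟩) ?_ ?_ ?_ ?_
  · intro a ha
    have hq := (Finset.mem_filter.1 ha).2
    have hlt := a.isLt
    by_cases he : Even a.val
    · have he' := Nat.even_iff.1 he
      have ha1 : 1 ≤ a.val := by omega
      have h2 : (⟨_, invpf a ha⟩ : Fin (2 * n)) = ⟨a.val - 1, by omega⟩ := by
        apply Fin.ext
        show (if Even a.val then a.val - 1 else a.val + 1) = a.val - 1
        rw [if_pos he]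
      show g a + g ⟨_, invpf a ha⟩ = 0
      rw [h2]
      have hp := hpair (a.val - 1) (by omega) (by omega)
      have hfin1 : (⟨a.val - 1 + 1, by omega⟩ : Fin (2 * n)) = a := Fin.ext (by simp; omega)
      rw [hfin1] at hp
      exact (add_comm _ _).trans hp
    · have he' := Nat.not_even_iff.1 he
      have h2 : (⟨_, invpf a ha⟩ : Fin (2 * n)) = ⟨a.val + 1, by omega⟩ := by
        apply Fin.ext
        show (if Even a.val then a.val - 1 else a.val + 1) = a.val + 1
        rw [if_neg he]
      show g a + g ⟨_, invpf a ha⟩ = 0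
      rw [h2]
      have hp := hpair a.val (by omega) he'
      have hfin1 : (⟨a.val, by omega⟩ : Fin (2 * n)) = a := Fin.ext rfl
      rw [hfin1] at hp
      exact hp
  · intro a ha _
    have hq := (Finset.mem_filter.1 ha).2
    show (⟨_, invpf a ha⟩ : Fin (2 * n)) ≠ a
    intro hcon
    have := congrArg Fin.val hcon
    simp only [Fin.val_mk] at this
    rcases Nat.even_or_odd a.val with he | ho
    · have he' := Nat.even_iff.1 he
      rw [if_pos he] at this
      omega
    · have ho' := Nat.odd_iff.1 ho
      rw [if_neg (by rw [Nat.even_iff]; omega)] at this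
      omega
  · intro a ha
    have hq := (Finset.mem_filter.1 ha).2
    show (⟨_, invpf a ha⟩ : Fin (2 * n)) ∈ Finset.univ.filter
      (fun t : Fin (2 * n) => 2 * i ≤ t.val + 1 ∧ t.val + 2 ≤ 2 * j)
    rw [Finset.mem_filter]
    refine ⟨Finset.mem_univ _, ?_⟩
    show 2 * i ≤ (if Even a.val then a.val - 1 else a.val + 1) + 1 ∧
      (if Even a.val then a.val - 1 else a.val + 1) + 2 ≤ 2 * j
    rcases Nat.even_or_odd a.val with he | ho
    · have he' := Nat.even_iff.1 he
      rw [if_pos he]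
      omega
    · have ho' := Nat.odd_iff.1 ho
      rw [if_neg (by rw [Nat.even_iff]; omega)]
      omega
  · intro a ha
    have hq := (Finset.mem_filter.1 ha).2
    apply Fin.ext
    show (if Even (if Even a.val then a.val - 1 else a.val + 1) then
        (if Even a.val then a.val - 1 else a.val + 1) - 1
      else (if Even a.val then a.val - 1 else a.val + 1) + 1) = a.val
    rcases Nat.even_or_odd a.val with he | ho
    · have he' := Nat.even_iff.1 he
      have ha1 : 1 ≤ a.val := by omega
      have hinner : (if Even a.val then a.val - 1 else a.val + 1) = a.val - 1 := if_pos he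
      rw [hinner, if_neg (by rw [Nat.even_iff]; omega)]
      omega
    · have ho' := Nat.odd_iff.1 ho
      have hnot : ¬ Even a.val := by rw [Nat.even_iff]; omega
      have hinner : (if Even a.val then a.val - 1 else a.val + 1) = a.val + 1 := if_neg hnot
      rw [hinner, if_pos (by rw [Nat.even_iff]; omega)]
      omega

lemma snake_sgn_eq_zero (i j : ℕ) (hi : 1 ≤ i) (hj : j ≤ n) (m : ∀ v, M v)
    (hm : m ∈ homInterval M f i j) :
    snakeMap M f (2 * i - 2) (2 * j - 1) (sgn (K := K) M m) = 0 := by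
  obtain ⟨hA, hB⟩ := (mem_homInterval_iff M f i j m).1 hm
  rw [snake_apply]
  have hterm : ∀ t : Fin (2 * n),
      Pi.single (headV n t) (f t (sgn (K := K) M m (tailV n t))) =
        if 2 * i ≤ t.val + 1 ∧ t.val + 2 ≤ 2 * j then
          ((-1 : K) ^ ((tailV n t).val / 2)) • Pi.single (headV n t) (m (headV n t))
        else 0 := by
    intro t
    rw [sgn_apply, map_smul, hB t]
    by_cases hq : 2 * i ≤ t.val + 1 ∧ t.val + 2 ≤ 2 * j
    · rw [if_pos hq, if_pos hq, Pi.single_smul]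
    · rw [if_neg hq, if_neg hq, smul_zero, Pi.single_zero]
  rw [Finset.sum_congr rfl fun t _ => hterm t, ← Finset.sum_filter]
  have hset : (Finset.univ.filter
        (fun t : Fin (2 * n) => 2 * i - 2 ≤ t.val ∧ t.val ≤ 2 * j - 1)).filter
        (fun t => 2 * i ≤ t.val + 1 ∧ t.val + 2 ≤ 2 * j) =
      Finset.univ.filter (fun t : Fin (2 * n) => 2 * i ≤ t.val + 1 ∧ t.val + 2 ≤ 2 * j) := by
    ext t
    simp only [Finset.mem_filter, Finset.mem_univ, true_and]
    exact ⟨fun h => h.2, fun h => ⟨⟨by omega, by omega⟩, h⟩⟩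
  rw [hset]
  refine sum_g_zero M i j hi hj _ ?_
  intro c hlt hc
  show ((-1 : K) ^ ((tailV n (⟨c, by omega⟩ : Fin (2 * n))).val / 2)) •
      Pi.single (headV n (⟨c, by omega⟩ : Fin (2 * n)))
        (m (headV n (⟨c, by omega⟩ : Fin (2 * n)))) +
    ((-1 : K) ^ ((tailV n (⟨c + 1, hlt⟩ : Fin (2 * n))).val / 2)) •
      Pi.single (headV n (⟨c + 1, hlt⟩ : Fin (2 * n)))
        (m (headV n (⟨c + 1, hlt⟩ : Fin (2 * n)))) = 0
  have e1 : (tailV n (⟨c, by omega⟩ : Fin (2 * n))).val = c := (tailV_mod _).2.2.2 hc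
  have e2 : (tailV n (⟨c + 1, hlt⟩ : Fin (2 * n))).val = c + 2 := by
    have h := (tailV_mod (⟨c + 1, hlt⟩ : Fin (2 * n))).2.2.1 (by simp only [Fin.val_mk]; omega)
    simp only [Fin.val_mk] at h ⊢
    omega
  rw [headV_succ c hlt hc, e1, e2]
  have he : (c + 2) / 2 = c / 2 + 1 := by omega
  rw [he, pow_succ, mul_neg_one, neg_smul, add_neg_cancel]
noncomputable def theta (i j : ℕ) (hi : 1 ≤ i) (hij : i ≤ j) (hj : j ≤ n) :
    homInterval M f i j →ₗ[K] LinearMap.ker (psi M f i j) :=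
  LinearMap.codRestrict _ ((restr (K := K) M i j).comp (homInterval M f i j).subtype)
    (by
      intro m
      rw [LinearMap.mem_ker, LinearMap.comp_apply, Submodule.coe_subtype, psi_apply]
      have heq : snakeMap M f (2 * i - 2) (2 * j - 1)
            (sgn (K := K) M (incl (K := K) M i j (restr (K := K) M i j m.val)))
          = snakeMap M f (2 * i - 2) (2 * j - 1) (sgn (K := K) M m.val) := by
        refine snake_congr M f i j hi (le_trans hi hij) _ _ fun v hv => ?_
        rw [sgn_apply, sgn_apply, incl_apply, dif_pos hv, restr_apply]
      rw [heq]
      exact snake_sgn_eq_zero M f i j hi hj m.val m.property)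

lemma theta_apply_val (i j : ℕ) (hi : 1 ≤ i) (hij : i ≤ j) (hj : j ≤ n)
    (m : homInterval M f i j) :
    (theta M f i j hi hij hj m).val = restr (K := K) M i j m.val := rfl

lemma hom_eq_zero (i j : ℕ) (hi : 1 ≤ i) (m : ∀ v, M v)
    (hm : m ∈ homInterval M f i j) (h0 : ∀ v, Cnd i j v → m v = 0) : m = 0 := by
  obtain ⟨hA, hB⟩ := (mem_homInterval_iff M f i j m).1 hm
  funext v
  show m v = 0
  by_cases hsup : 2 * i ≤ v.val + 1 ∧ v.val + 1 ≤ 2 * j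
  · rcases Nat.even_or_odd v.val with he | ho
    · have he' := Nat.even_iff.1 he
      have hlt := v.isLt
      set t : Fin (2 * n) := ⟨v.val - 1, by omega⟩ with ht
      have htodd : t.val % 2 = 1 := by show (v.val - 1) % 2 = 1; omega
      have hhead : headV n t = v := by
        apply Fin.ext
        have h1 := (headV_mod t).2.2.2 htodd
        rw [h1]
        show (v.val - 1) + 1 = v.val
        omega
      have htval : t.val = v.val - 1 := rfl
      have hq : 2 * i ≤ t.val + 1 ∧ t.val + 2 ≤ 2 * j := by omega
      have hBt := hB t
      rw [if_pos hq] at hBt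
      have htz : m (tailV n t) = 0 := by
        apply h0
        obtain ⟨hpar, hor, he0, ho1⟩ := tailV_mod t
        have htv : (tailV n t).val = v.val - 1 := ho1 htodd
        exact ⟨by rw [Nat.even_iff]; omega, by omega, by omega⟩
      rw [htz, map_zero] at hBt
      rw [hhead] at hBt
      exact hBt.symm
    · have ho' := Nat.odd_iff.1 ho
      exact h0 v ⟨by rw [Nat.even_iff]; omega, by omega, by omega⟩
  · exact hA v hsup

lemma theta_injective (i j : ℕ) (hi : 1 ≤ i) (hij : i ≤ j) (hj : j ≤ n) :
    Function.Injective (theta M f i j hi hij hj) := by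
  intro x y hxy
  have hval : restr (K := K) M i j x.val = restr (K := K) M i j y.val := by
    have := congrArg Subtype.val hxy
    rwa [theta_apply_val, theta_apply_val] at this
  have hsub : (x.val - y.val) = 0 := by
    refine hom_eq_zero M f i j hi _ (sub_mem x.property y.property) fun v hv => ?_
    have := congrFun hval (⟨v, hv⟩ : {v : Fin (2 * n + 1) // Cnd i j v})
    rw [restr_apply, restr_apply] at this
    show x.val v - y.val v = 0
    rw [this, sub_self]
  exact Subtype.ext (sub_eq_zero.1 hsub)

noncomputable def bsnake (i j : ℕ) : (∀ v, M v) →ₗ[K] (∀ v, M v) :=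
  ∑ t ∈ Finset.univ.filter
      (fun t : Fin (2 * n) => t.val % 2 = 1 ∧ 2 * i - 1 ≤ t.val ∧ t.val ≤ 2 * j - 3),
    (LinearMap.single K M (headV n t)).comp ((f t).comp (LinearMap.proj (tailV n t)))

lemma bsnake_apply (i j : ℕ) (u : ∀ v, M v) :
    bsnake M f i j u =
      ∑ t ∈ Finset.univ.filter
          (fun t : Fin (2 * n) => t.val % 2 = 1 ∧ 2 * i - 1 ≤ t.val ∧ t.val ≤ 2 * j - 3),
        Pi.single (headV n t) (f t (u (tailV n t))) := by
  simp [bsnake, LinearMap.sum_apply, LinearMap.comp_apply]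

lemma bsnake_eval₀ (i j : ℕ) (u : ∀ v, M v) (y : Fin (2 * n + 1))
    (h : ∀ t : Fin (2 * n), t.val % 2 = 1 → 2 * i - 1 ≤ t.val → t.val ≤ 2 * j - 3 →
      headV n t ≠ y) :
    bsnake M f i j u y = 0 := by
  rw [bsnake_apply]
  refine sum_single_apply₀ M _ _ y fun t ht => ?_
  have h1 := (Finset.mem_filter.1 ht).2
  exact h t h1.1 h1.2.1 h1.2.2

lemma bsnake_eval₁ (i j : ℕ) (u : ∀ v, M v) (y : Fin (2 * n + 1)) (t₁ : Fin (2 * n))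
    (h₁ : t₁.val % 2 = 1 ∧ 2 * i - 1 ≤ t₁.val ∧ t₁.val ≤ 2 * j - 3)
    (huniq : ∀ t : Fin (2 * n), t.val % 2 = 1 → 2 * i - 1 ≤ t.val → t.val ≤ 2 * j - 3 →
      t ≠ t₁ → headV n t ≠ y) :
    bsnake M f i j u y = Pi.single (headV n t₁) (f t₁ (u (tailV n t₁))) y := by
  rw [bsnake_apply]
  refine sum_single_apply_unique M _ _ y t₁
    (by rw [Finset.mem_filter]; exact ⟨Finset.mem_univ _, h₁⟩) fun t ht hne => ?_
  have h1 := (Finset.mem_filter.1 ht).2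
  exact huniq t h1.1 h1.2.1 h1.2.2 hne

lemma ker_single (i j : ℕ) (u : ∀ v, M v)
    (hker : snakeMap M f (2 * i - 2) (2 * j - 1) (sgn (K := K) M u) = 0)
    (t₀ : Fin (2 * n)) (h₀ : 2 * i - 2 ≤ t₀.val ∧ t₀.val ≤ 2 * j - 1)
    (huniq : ∀ t' : Fin (2 * n), 2 * i - 2 ≤ t'.val → t'.val ≤ 2 * j - 1 → t' ≠ t₀ →
      headV n t' ≠ headV n t₀) :
    f t₀ (u (tailV n t₀)) = 0 := by
  rw [snake_apply] at hker
  have h := congrFun hker (headV n t₀)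
  rw [sum_single_apply_unique M _ _ _ t₀
      (by rw [Finset.mem_filter]; exact ⟨Finset.mem_univ _, h₀⟩)
      (fun t' ht' hne => huniq t' (Finset.mem_filter.1 ht').2.1
        (Finset.mem_filter.1 ht').2.2 hne),
    Pi.single_eq_same, Pi.zero_apply, sgn_apply, map_smul, smul_eq_zero] at h
  rcases h with h | h
  · exact absurd h (pow_ne_zero _ (neg_ne_zero.2 one_ne_zero))
  · exact h

lemma ker_pair (i j : ℕ) (u : ∀ v, M v)
    (hker : snakeMap M f (2 * i - 2) (2 * j - 1) (sgn (K := K) M u) = 0)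
    (t₀ t₁ : Fin (2 * n))
    (h₀ : 2 * i - 2 ≤ t₀.val ∧ t₀.val ≤ 2 * j - 1)
    (h₁ : 2 * i - 2 ≤ t₁.val ∧ t₁.val ≤ 2 * j - 1) (hne : t₀ ≠ t₁)
    (huniq : ∀ t' : Fin (2 * n), 2 * i - 2 ≤ t'.val → t'.val ≤ 2 * j - 1 → t' ≠ t₀ →
      t' ≠ t₁ → headV n t' ≠ headV n t₀) :
    ((-1 : K) ^ ((tailV n t₀).val / 2)) • f t₀ (u (tailV n t₀))
      + ((-1 : K) ^ ((tailV n t₁).val / 2)) •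
          Pi.single (headV n t₁) (f t₁ (u (tailV n t₁))) (headV n t₀) = 0 := by
  rw [snake_apply] at hker
  have h := congrFun hker (headV n t₀)
  rw [sum_single_apply_pair M _ _ _ t₀ t₁
      (by rw [Finset.mem_filter]; exact ⟨Finset.mem_univ _, h₀⟩)
      (by rw [Finset.mem_filter]; exact ⟨Finset.mem_univ _, h₁⟩) hne
      (fun t' ht' hne₀ hne₁ => huniq t' (Finset.mem_filter.1 ht').2.1
        (Finset.mem_filter.1 ht').2.2 hne₀ hne₁),
    Pi.single_eq_same, Pi.zero_apply] at h
  rw [sgn_apply, sgn_apply, map_smul, map_smul, Pi.single_smul, Pi.smul_apply] at h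
  exact h

lemma theta_surjective (i j : ℕ) (hi : 1 ≤ i) (hij : i ≤ j) (hj : j ≤ n) :
    Function.Surjective (theta M f i j hi hij hj) := by
  rintro ⟨d, hd⟩
  rw [LinearMap.mem_ker, psi_apply] at hd
  set u : ∀ v, M v := incl (K := K) M i j d with hu
  have hu0 : ∀ v, ¬ Cnd i j v → u v = 0 := fun v h => by rw [hu, incl_apply, dif_neg h]
  have huv : ∀ v (h : Cnd i j v), u v = d ⟨v, h⟩ := fun v h => by
    rw [hu, incl_apply, dif_pos h]
  set m : ∀ v, M v := u + bsnake M f i j u with hm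
  have hBodd : ∀ v : Fin (2 * n + 1), v.val % 2 = 1 → bsnake M f i j u v = 0 := by
    intro v hv
    refine bsnake_eval₀ M f i j u v fun t _ _ _ hh => ?_
    have h1 := (headV_mod t).1
    have h2 := congrArg Fin.val hh
    omega
  have hmem : m ∈ homInterval M f i j := by
    rw [mem_homInterval_iff]
    constructor
    · intro v hv
      have h1 : u v = 0 := by
        refine hu0 v ?_
        rintro ⟨ho, hb1, hb2⟩
        rw [Nat.not_even_iff] at ho
        exact hv ⟨by omega, by omega⟩
      have h2 : bsnake M f i j u v = 0 := by
        refine bsnake_eval₀ M f i j u v fun t h3 h4 h5 hh => ?_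
        obtain ⟨hone, hor, he0, ho1⟩ := headV_mod t
        have h6 := congrArg Fin.val hh
        have h7 := ho1 h3
        omega
      rw [hm, Pi.add_apply, h1, h2, add_zero]
    · intro t
      have htail := tailV_mod t
      have hmtail : m (tailV n t) = u (tailV n t) := by
        rw [hm, Pi.add_apply, hBodd _ htail.1, add_zero]
      rw [hmtail]
      by_cases hq : 2 * i ≤ t.val + 1 ∧ t.val + 2 ≤ 2 * j
      · rw [if_pos hq]
        rcases Nat.even_or_odd t.val with he | ho
        · -- t even: interior arrow of the first kind
          have he' := Nat.even_iff.1 he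
          have hlt := t.isLt
          set t2 : Fin (2 * n) := ⟨t.val - 1, by omega⟩ with ht2
          have ht2v : t2.val = t.val - 1 := rfl
          have ht2odd : t2.val % 2 = 1 := by omega
          have hheadt : (headV n t).val = t.val := (headV_mod t).2.2.1 he'
          have hheadt2 : (headV n t2).val = t2.val + 1 := (headV_mod t2).2.2.2 ht2odd
          have htailt : (tailV n t).val = t.val + 1 := htail.2.2.1 he'
          have htailt2 : (tailV n t2).val = t2.val := (tailV_mod t2).2.2.2 ht2odd
          have hW : m (headV n t)
              = Pi.single (headV n t2) (f t2 (u (tailV n t2))) (headV n t) := by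
            have hu' : u (headV n t) = 0 :=
              hu0 _ (fun hc => hc.1 (by rw [Nat.even_iff]; omega))
            have hB' := bsnake_eval₁ M f i j u (headV n t) t2
              ⟨ht2odd, by omega, by omega⟩
              (fun t' h1 h2 h3 hne => by
                intro hh
                have hv := congrArg Fin.val hh
                have hh1 := (headV_mod t').2.2.2 h1
                exact hne (Fin.ext (by omega)))
            rw [hm, Pi.add_apply, hu', hB', zero_add]
          have hkp := ker_pair M f i j u hd t t2
            ⟨by omega, by omega⟩ ⟨by omega, by omega⟩
            (fun hh => by have := congrArg Fin.val hh; omega)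
            (fun t' hb1 hb2 hne1 hne2 => by
              intro hh
              have hv := congrArg Fin.val hh
              obtain ⟨hone, hor, he0, ho1⟩ := headV_mod t'
              rcases Nat.even_or_odd t'.val with he2 | ho2
              · have h8 := he0 (Nat.even_iff.1 he2)
                exact hne1 (Fin.ext (by omega))
              · have h8 := ho1 (Nat.odd_iff.1 ho2)
                exact hne2 (Fin.ext (by omega)))
          rw [htailt, htailt2, ht2v] at hkp
          have hexp : (t.val + 1) / 2 = (t.val - 1) / 2 + 1 := by omega
          rw [hexp, pow_succ, mul_neg_one, neg_smul, neg_add_eq_zero] at hkp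
          have hX := smul_right_injective (M (headV n t))
            (pow_ne_zero ((t.val - 1) / 2) (neg_ne_zero.2 (one_ne_zero (α := K)))) hkp
          rw [hW, ← hX]
        · -- t odd: interior arrow of the second kind
          have ho' := Nat.odd_iff.1 ho
          have hheadt : (headV n t).val = t.val + 1 := (headV_mod t).2.2.2 ho'
          have hu' : u (headV n t) = 0 :=
            hu0 _ (fun hc => hc.1 (by rw [Nat.even_iff]; omega))
          have hB' := bsnake_eval₁ M f i j u (headV n t) t
            ⟨ho', by omega, by omega⟩
            (fun t' h1 h2 h3 hne => by
              intro hh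
              have hv := congrArg Fin.val hh
              have hh1 := (headV_mod t').2.2.2 h1
              exact hne (Fin.ext (by omega)))
          rw [hm, Pi.add_apply, hu', hB', zero_add, Pi.single_eq_same]
      · rw [if_neg hq]
        by_cases hb1 : t.val = 2 * i - 2
        · refine ker_single M f i j u hd t ⟨by omega, by omega⟩ ?_
          intro t' hc1 hc2 hne
          intro hh
          have hv := congrArg Fin.val hh
          have hheadt : (headV n t).val = t.val := (headV_mod t).2.2.1 (by omega)
          obtain ⟨hone, hor, he0, ho1⟩ := headV_mod t'
          rcases Nat.even_or_odd t'.val with he2 | ho2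
          · have h8 := he0 (Nat.even_iff.1 he2)
            exact hne (Fin.ext (by omega))
          · have h8 := ho1 (Nat.odd_iff.1 ho2)
            omega
        · by_cases hb2 : t.val = 2 * j - 1
          · refine ker_single M f i j u hd t ⟨by omega, by omega⟩ ?_
            intro t' hc1 hc2 hne
            intro hh
            have hv := congrArg Fin.val hh
            have hheadt : (headV n t).val = t.val + 1 := (headV_mod t).2.2.2 (by omega)
            obtain ⟨hone, hor, he0, ho1⟩ := headV_mod t'
            rcases Nat.even_or_odd t'.val with he2 | ho2
            · have h8 := he0 (Nat.even_iff.1 he2)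
              omega
            · have h8 := ho1 (Nat.odd_iff.1 ho2)
              exact hne (Fin.ext (by omega))
          · have htz : u (tailV n t) = 0 := by
              refine hu0 _ ?_
              rintro ⟨ho2, hb3, hb4⟩
              rw [Nat.not_even_iff] at ho2
              rcases htail.2.1 with h | h <;> omega
            rw [htz, map_zero]
  refine ⟨⟨m, hmem⟩, Subtype.ext (funext fun v => ?_)⟩
  show m v.val = d v
  rw [hm, Pi.add_apply, hBodd v.val (Nat.not_even_iff.1 v.property.1), add_zero,
    huv v.val v.property]

noncomputable def homEquiv (i j : ℕ) (hi : 1 ≤ i) (hij : i ≤ j) (hj : j ≤ n) :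
    homInterval M f i j ≃ₗ[K] LinearMap.ker (psi M f i j) :=
  LinearEquiv.ofBijective (theta M f i j hi hij hj)
    ⟨theta_injective M f i j hi hij hj, theta_surjective M f i j hi hij hj⟩

end Stmt17

/-- the rank of the snake matrix computes a Hom space.  For a
representation `V` of the bipartite type `A` quiver and the interval
`J = [α_i, β_j]` (arrows `2i-2, …, 2j-1`),
`rank M_J(V) + dim Hom_Q(I_{[β_i, α_j]}, V) = Σ_k dim V_{x_k}`, the sum being over the
`x`-vertices (the odd vertices in the vertex span `[2i-2, 2j]` of `J`), i.e. over the
column blocks of `M_J`. -/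
theorem stmt17 {K : Type*} [Field K] {n : ℕ} (i j : ℕ)
    (hi : 1 ≤ i) (hij : i ≤ j) (hj : j ≤ n)
    (M : Fin (2 * n + 1) → Type*)
    [∀ v, AddCommGroup (M v)] [∀ v, Module K (M v)] [∀ v, FiniteDimensional K (M v)]
    (f : ∀ t : Fin (2 * n), M (tailV n t) →ₗ[K] M (headV n t)) :
    finrank K (LinearMap.range (snakeMap M f (2 * i - 2) (2 * j - 1)))
        + finrank K (homInterval M f i j)
      = ∑ v ∈ Finset.univ.filter (fun v : Fin (2 * n + 1) =>
            ¬ Even v.val ∧ 2 * i - 2 ≤ v.val ∧ v.val ≤ 2 * j),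
          finrank K (M v) := by
  have hj1 : 1 ≤ j := le_trans hi hij
  have hrank := LinearMap.finrank_range_add_finrank_ker (Stmt17.psi M f i j)
  rw [Stmt17.psi_range M f i j hi hj1] at hrank
  have hdim : finrank K (homInterval M f i j)
      = finrank K (LinearMap.ker (Stmt17.psi M f i j)) :=
    (Stmt17.homEquiv M f i j hi hij hj).finrank_eq
  rw [hdim, hrank, Module.finrank_pi_fintype K]
  exact (Finset.sum_subtype _
    (by intro v; simp [Stmt17.Cnd, Finset.mem_filter]) (fun v => finrank K (M v))).symm
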